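/- Let μ be a partition of length l, and for each i = 1,…,l let M_i be a multiset of μ_i positive integers. Then there exists a unique filling σ : dg(μ) → ℤ₊ such that for each i the multiset of entries of σ in row i equals M_i and inv(σ) = 0. -/

import Mathlib

open Finset MvPolynomial

namespace HHL

/-! ### Diagrams, fillings and the statistics `inv` and `maj` -/

/-- The cells of the Young diagram of the partition `μ` (given as the list of
its row lengths `μ_1, μ_2, …`); the cell `(i,j)` lies in row `i` (from the
bottom, French style) and column `j`, with `1 ≤ i ≤ ℓ(μ)`, `1 ≤ j ≤ μ_i`. -/
def cells (μ : List ℕ) : Finset (ℕ × ℕ) :=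
  (Finset.Icc 1 μ.length ×ˢ Finset.Icc 1 (μ.foldr max 0)).filter
    (fun u => u.2 ≤ μ.getD (u.1 - 1) 0)

/-- `μ` is a partition: a weakly decreasing list of positive integers. -/
def IsPartitionList (μ : List ℕ) : Prop := μ.Pairwise (· ≥ ·) ∧ ∀ x ∈ μ, 0 < x

/-- The arm of a cell: the number of cells strictly to its right in its row. -/
def arm (μ : List ℕ) (u : ℕ × ℕ) : ℕ :=
  ((cells μ).filter (fun v => v.1 = u.1 ∧ u.2 < v.2)).card

/-- The leg of a cell: the number of cells strictly above it in its column. -/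
def leg (μ : List ℕ) (u : ℕ × ℕ) : ℕ :=
  ((cells μ).filter (fun v => v.2 = u.2 ∧ u.1 < v.1)).card

/-- `u` precedes `v` in the reading order (row by row from the top row down,
left to right within each row). -/
def ReadBefore (u v : ℕ × ℕ) : Prop := v.1 < u.1 ∨ (u.1 = v.1 ∧ u.2 < v.2)

instance (u v : ℕ × ℕ) : Decidable (ReadBefore u v) := by
  unfold ReadBefore; infer_instance

/-- `u` and `v` attack each other and `u` precedes `v` in reading order: either
they are in the same row with `u` to the left, or `u` is one row above `v` and
strictly to its right. -/
def AttackOrd (u v : ℕ × ℕ) : Prop :=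
  (u.1 = v.1 ∧ u.2 < v.2) ∨ (u.1 = v.1 + 1 ∧ v.2 < u.2)

instance (u v : ℕ × ℕ) : Decidable (AttackOrd u v) := by
  unfold AttackOrd; infer_instance

/-- `u` and `v` attack each other. -/
def Attack (u v : ℕ × ℕ) : Prop := AttackOrd u v ∨ AttackOrd v u

instance (u v : ℕ × ℕ) : Decidable (Attack u v) := by
  unfold Attack; infer_instance

section Stats

variable {V : Type} (μ : List ℕ) (Ind : V → V → Prop) [DecidableRel Ind] (σ : ℕ × ℕ → V)

/-- The set `Inv(σ)` of inversions of a filling `σ`, recorded as ordered pairs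
`(u,v)` with `u` attacking `v`, `u` preceding `v` in reading order, and
`I(σ(u),σ(v)) = 1`; here `Ind x y` means `I(x,y) = 1` (for ordinary fillings
`Ind x y ↔ x > y`). -/
def invPairs : Finset ((ℕ × ℕ) × (ℕ × ℕ)) :=
  ((cells μ) ×ˢ (cells μ)).filter fun p => AttackOrd p.1 p.2 ∧ Ind (σ p.1) (σ p.2)

/-- The descent set `Des(σ)`: cells `u = (i+1,j)` with `v = (i,j) ∈ dg(μ)` and
`I(σ(u),σ(v)) = 1`. -/
def desCells : Finset (ℕ × ℕ) :=
  (cells μ).filter fun u => (u.1 - 1, u.2) ∈ cells μ ∧ Ind (σ u) (σ (u.1 - 1, u.2))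

/-- `maj(σ) = Σ_{u ∈ Des(σ)} (leg(u) + 1)`. -/
def majStat : ℕ := ∑ u ∈ desCells μ Ind σ, (leg μ u + 1)

/-- `inv(σ) = |Inv(σ)| − Σ_{u ∈ Des(σ)} arm(u)`. -/
def invStat : ℕ := (invPairs μ Ind σ).card - ∑ u ∈ desCells μ Ind σ, arm μ u

end Stats

/-- For ordinary (positive-integer valued) fillings, `I(x,y) = 1` iff `x > y`. -/
def natInd : ℕ → ℕ → Prop := fun x y => y < x

instance : DecidableRel natInd := fun _ _ => by unfold natInd; infer_instance

/-- Extend a function defined on the cells of `μ` to a total function. -/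
def extendF {V : Type} (μ : List ℕ) (d : V) (f : {u // u ∈ cells μ} → V) : ℕ × ℕ → V :=
  fun u => if h : u ∈ cells μ then f ⟨u, h⟩ else d

/-- A filling of `dg(μ)` with entries in `{1, …, N}`, encoded by a function to
`Fin N` (value `k` means the entry `k + 1`), as a total function `ℕ × ℕ → ℕ`. -/
def natFill (μ : List ℕ) {N : ℕ} (f : {u // u ∈ cells μ} → Fin N) : ℕ × ℕ → ℕ :=
  extendF μ 0 fun u => (f u).val + 1

/-- Haglund's combinatorial formula
`C_μ(x_1,…,x_N;q,t) = Σ_σ q^{inv(σ)} t^{maj(σ)} x^σ`, a polynomial in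
`x_1,…,x_N` with coefficients in `ℤ[q,t]`, where `q = C (X 0)`, `t = C (X 1)`. -/
noncomputable def Cmu (μ : List ℕ) (N : ℕ) :
    MvPolynomial (Fin N) (MvPolynomial (Fin 2) ℤ) :=
  ∑ f : {u // u ∈ cells μ} → Fin N,
    C ((X 0 : MvPolynomial (Fin 2) ℤ) ^ invStat μ natInd (natFill μ f) *
       (X 1 : MvPolynomial (Fin 2) ℤ) ^ majStat μ natInd (natFill μ f)) *
    ∏ u, X (f u)

/-! ### Skew diagrams and LLT polynomials -/

/-- A pair of partitions `(λ, μ)` with `μ ⊆ λ`, representing the skew diagram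
`λ∖μ`. -/
def IsSkewPair (p : List ℕ × List ℕ) : Prop :=
  IsPartitionList p.1 ∧ IsPartitionList p.2 ∧ ∀ i, p.2.getD i 0 ≤ p.1.getD i 0

/-- The cells of the skew diagram `λ∖μ`. -/
def skewCells (p : List ℕ × List ℕ) : Finset (ℕ × ℕ) := cells p.1 \ cells p.2

/-- The content `c(u) = i − j` of the cell `u = (i,j)`. -/
def content (u : ℕ × ℕ) : ℤ := (u.1 : ℤ) - (u.2 : ℤ)

/-- The disjoint union of the cells of a tuple of skew diagrams. -/
abbrev TDom {k : ℕ} (ν : Fin k → List ℕ × List ℕ) : Type :=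
  Σ i : Fin k, {u // u ∈ skewCells (ν i)}

/-- `f` (with `f ⟨i,u⟩` the entry of the `i`-th tableau at the cell `u`) is a
tuple of semistandard Young tableaux: entries weakly increasing along each row
and strictly increasing up each column. -/
def IsSSYTtuple {k : ℕ} (ν : Fin k → List ℕ × List ℕ) (f : TDom ν → ℕ) : Prop :=
  ∀ i : Fin k, ∀ u v : {u // u ∈ skewCells (ν i)},
    (u.1.1 = v.1.1 ∧ u.1.2 ≤ v.1.2 → f ⟨i, u⟩ ≤ f ⟨i, v⟩) ∧
    (u.1.2 = v.1.2 ∧ u.1.1 < v.1.1 → f ⟨i, u⟩ < f ⟨i, v⟩)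

instance {k : ℕ} (ν : Fin k → List ℕ × List ℕ) (f : TDom ν → ℕ) :
    Decidable (IsSSYTtuple ν f) := by unfold IsSSYTtuple; infer_instance

/-- The number of inversions of a tuple of tableaux: pairs of entries
`T^(i)(u) > T^(j)(v)` with either `i < j` and `c(u) = c(v)`, or `i > j` and
`c(u) = c(v) + 1`. -/
def lltInv {k : ℕ} (ν : Fin k → List ℕ × List ℕ) (f : TDom ν → ℕ) : ℕ :=
  (Finset.univ.filter fun p : TDom ν × TDom ν =>
    ((p.1.1 < p.2.1 ∧ content p.1.2.1 = content p.2.2.1) ∨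
     (p.2.1 < p.1.1 ∧ content p.1.2.1 = content p.2.2.1 + 1)) ∧
    f p.2 < f p.1).card

/-- The LLT polynomial `G_ν(x_1,…,x_N;q) = Σ_T q^{inv(T)} x^T` in `N`
variables, with coefficients in `ℤ[q]` (`q = C Polynomial.X`); tableau entries
in `{1,…,N}` are encoded by `Fin N` (value `k` means entry `k + 1`). -/
noncomputable def llt {k : ℕ} (ν : Fin k → List ℕ × List ℕ) (N : ℕ) :
    MvPolynomial (Fin N) (Polynomial ℤ) :=
  ∑ f ∈ Finset.univ.filter (fun f : TDom ν → Fin N =>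
      IsSSYTtuple ν (fun a => (f a).val + 1)),
    C (Polynomial.X ^ lltInv ν (fun a => (f a).val + 1)) * ∏ a, X (f a)

/-! ### The super alphabet -/

/-- The super alphabet `A = {1, 1̄, 2, 2̄, …}`: the letter `(a, b)` has absolute
value `a + 1` and is negative (barred) iff `b = true`. -/
abbrev SLetter : Type := ℕ × Bool

/-- The absolute value of a super letter. -/
def sAbs (x : SLetter) : ℕ := x.1 + 1

/-- The ordering `<₁`: `1 < 1̄ < 2 < 2̄ < ⋯`. -/
def lt1 (x y : SLetter) : Prop :=
  x.1 < y.1 ∨ (x.1 = y.1 ∧ x.2 = false ∧ y.2 = true)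

instance : DecidableRel lt1 := fun _ _ => by unfold lt1; infer_instance

/-- The ordering `<₂`: `1 < 2 < 3 < ⋯ < 3̄ < 2̄ < 1̄`. -/
def lt2 (x y : SLetter) : Prop :=
  (x.2 = false ∧ y.2 = false ∧ x.1 < y.1) ∨ (x.2 = false ∧ y.2 = true) ∨
    (x.2 = true ∧ y.2 = true ∧ y.1 < x.1)

instance : DecidableRel lt2 := fun _ _ => by unfold lt2; infer_instance

/-- Given a total order `lt` on the super alphabet, `IndOf lt x y` holds iff
`I(x,y) = 1`, i.e. `x > y`, or `x = y` is a negative letter. -/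
def IndOf (lt : SLetter → SLetter → Prop) (x y : SLetter) : Prop :=
  lt y x ∨ (x = y ∧ x.2 = true)

instance (lt : SLetter → SLetter → Prop) [DecidableRel lt] : DecidableRel (IndOf lt) :=
  fun _ _ => by unfold IndOf; infer_instance

/-- A super filling of `dg(μ)` with letters of absolute value at most `N`, as a
total function (the value `(a, b)` with `a : Fin N` means the letter of
absolute value `a + 1`, barred iff `b`). -/
def superFill (μ : List ℕ) {N : ℕ} (f : {u // u ∈ cells μ} → Fin N × Bool) :
    ℕ × ℕ → SLetter :=
  extendF μ (0, false) fun u => ((f u).1.val, (f u).2)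

/-- A super filling with entries in `{1, 1̄}` (`f u = true` means entry `1̄`). -/
def boolFill (μ : List ℕ) (f : {u // u ∈ cells μ} → Bool) : ℕ × ℕ → SLetter :=
  extendF μ (0, false) fun u => ((0 : ℕ), f u)

/-- `m(σ)`: the number of negative entries of a super filling. -/
def negCount (μ : List ℕ) (σ : ℕ × ℕ → SLetter) : ℕ :=
  ((cells μ).filter fun u => (σ u).2 = true).card

/-- `p(σ)`: the number of positive entries of a super filling. -/
def posCount (μ : List ℕ) (σ : ℕ × ℕ → SLetter) : ℕ :=
  ((cells μ).filter fun u => (σ u).2 = false).card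

/-- A super filling is non-attacking if entries in attacking cells have
distinct absolute values. -/
def NonAttacking (μ : List ℕ) (σ : ℕ × ℕ → SLetter) : Prop :=
  ∀ u ∈ cells μ, ∀ v ∈ cells μ, Attack u v → sAbs (σ u) ≠ sAbs (σ v)

instance (μ : List ℕ) (σ : ℕ × ℕ → SLetter) : Decidable (NonAttacking μ σ) := by
  unfold NonAttacking; infer_instance

/-! ### Conjugate partitions, ribbons, connectivity -/

/-- `conj μ j = μ'_j`, the number of rows of `μ` of length at least `j`. -/
def conj (μ : List ℕ) (j : ℕ) : ℕ :=
  ((Finset.range μ.length).filter fun i => j ≤ μ.getD i 0).card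

/-- The transpose `μ'` of a partition, as a list. -/
def conjList (μ : List ℕ) : List ℕ :=
  (List.range (μ.foldr max 0)).map fun j => conj μ (j + 1)

/-- Transpose of a skew shape: `λ∖μ ↦ λ'∖μ'`. -/
def transposePair (p : List ℕ × List ℕ) : List ℕ × List ℕ :=
  (conjList p.1, conjList p.2)

/-- Two cells are adjacent (share an edge). -/
def AdjCell (u v : ℕ × ℕ) : Prop :=
  (u.1 = v.1 ∧ (u.2 = v.2 + 1 ∨ v.2 = u.2 + 1)) ∨
  (u.2 = v.2 ∧ (u.1 = v.1 + 1 ∨ v.1 = u.1 + 1))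

/-- A set of cells is connected (any two cells are joined by a path of
edge-adjacent cells inside the set). -/
def ConnSet (s : Finset (ℕ × ℕ)) : Prop :=
  ∀ u ∈ s, ∀ v ∈ s, Relation.ReflTransGen (fun a b => a ∈ s ∧ b ∈ s ∧ AdjCell a b) u v

/-- A set of cells contains no 2×2 block. -/
def No2x2 (s : Finset (ℕ × ℕ)) : Prop :=
  ¬ ∃ i j, (i, j) ∈ s ∧ (i + 1, j) ∈ s ∧ (i, j + 1) ∈ s ∧ (i + 1, j + 1) ∈ s

/-! ### Reading words and cocharge -/

/-- Boolean comparison realizing the reading order. -/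
def readLe (u v : ℕ × ℕ) : Bool :=
  decide (v.1 < u.1) || (decide (u.1 = v.1) && decide (u.2 ≤ v.2))

/-- The reading word of a filling `σ` of `dg(μ)`: its entries listed in reading
order. -/
noncomputable def readingWord (μ : List ℕ) (σ : ℕ × ℕ → ℕ) : List ℕ :=
  ((cells μ).toList.mergeSort readLe).map σ

/-- Boolean comparison for the cocharge-word ordering of the cells: entries of
`σ` decreasing and, within constant segments of `σ`, cells in decreasing
reading order. -/
def cwordLe (σ : ℕ × ℕ → ℕ) (u v : ℕ × ℕ) : Bool :=
  decide (σ v < σ u) ||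
    (decide (σ u = σ v) &&
      (decide (u.1 < v.1) || (decide (u.1 = v.1) && decide (v.2 ≤ u.2))))

/-- The cocharge word of a filling: the row indices of the cells, listed so that
the entries are decreasing, with ties broken by decreasing reading order. -/
noncomputable def cword (μ : List ℕ) (σ : ℕ × ℕ → ℕ) : List ℕ :=
  ((cells μ).toList.mergeSort (cwordLe σ)).map Prod.fst

/-- Cocharge of a word that is a permutation of `{1,…,n}`:
`Σ_{i ∈ D(w⁻¹)} (n − i)`, where `i ∈ D(w⁻¹)` iff `i + 1` occurs before `i`. -/
def cochargePerm (w : List ℕ) : ℕ :=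
  ∑ i ∈ Finset.Icc 1 (w.length - 1),
    if w.idxOf (i + 1) < w.idxOf i then w.length - i else 0

/-- The (0-based) positions of the letter `a` in `w`. -/
def letterPositions (w : List ℕ) (a : ℕ) : Finset ℕ :=
  (Finset.range w.length).filter fun k => w.getD k 0 = a

/-- The position `k_i` for the letter `a`: the rightmost occurrence of `a`
strictly to the left of `bound` if there is one, otherwise the rightmost
occurrence of `a`. -/
def choosePos (w : List ℕ) (a : ℕ) (bound : Option ℕ) : Option ℕ :=
  match bound with
  | none => (letterPositions w a).max
  | some b =>
      let s := (letterPositions w a).filter (· < b)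
      if s.Nonempty then s.max else (letterPositions w a).max

/-- `posListAux w i = [k_i, k_{i-1}, …, k_1]` (as options). -/
def posListAux (w : List ℕ) : ℕ → List (Option ℕ)
  | 0 => []
  | i + 1 =>
      let rest := posListAux w i
      choosePos w (i + 1) (rest.headD none) :: rest

/-- The set `S = {k_1, …, k_l}` of positions extracted in the cocharge
recursion, where `l` is the largest letter of `w`. -/
def extractSet (w : List ℕ) : Finset ℕ :=
  ((posListAux w (w.foldr max 0)).filterMap id).toFinset

/-- The subword of `w` at the positions in `S` (in increasing position order). -/
def subwordOn (w : List ℕ) (S : Finset ℕ) : List ℕ :=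
  ((List.range w.length).filter fun k => decide (k ∈ S)).map fun k => w.getD k 0

/-- The subword of `w` at the positions *not* in `S`. -/
def subwordOff (w : List ℕ) (S : Finset ℕ) : List ℕ :=
  ((List.range w.length).filter fun k => decide (k ∉ S)).map fun k => w.getD k 0

/-- Fuelled cocharge recursion: `cocharge w = cocharge y + cocharge z`, where
`y` is the extracted subword (a permutation of `{1,…,l}`) and `z` is the
complementary subword. -/
def cochargeAux : ℕ → List ℕ → ℕ
  | 0, _ => 0
  | fuel + 1, w =>
      let S := extractSet w
      let z := subwordOff w S
      if z.length < w.length then cochargePerm (subwordOn w S) + cochargeAux fuel z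
      else cochargePerm (subwordOn w S)

/-- The cocharge of a word of partition content. -/
def cocharge (w : List ℕ) : ℕ := cochargeAux w.length w

/-! ### Yamanouchi words and crystal operators -/

/-- A word is Yamanouchi if every final segment contains at least as many
letters `i` as letters `i + 1`, for every `i ≥ 1`. -/
def IsYamanouchi (w : List ℕ) : Prop :=
  ∀ k i, ((w.drop k).count (i + 2)) ≤ ((w.drop k).count (i + 1))

noncomputable instance : DecidablePred IsYamanouchi := fun _ => Classical.propDecidable _

/-- The letters `i` (close, `false`) and `i + 1` (open, `true`) of `w`, as a
list of (position, is-open) tokens in position order. -/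
def tokens (i : ℕ) (w : List ℕ) : List (ℕ × Bool) :=
  (List.range w.length).filterMap fun k =>
    if w.getD k 0 = i + 1 then some (k, true)
    else if w.getD k 0 = i then some (k, false) else none

/-- Stack pass performing the repeated deletion of adjacent matched pairs (an
`i + 1` immediately followed by an `i` in the current subword). The first
argument is the (reversed) list of surviving tokens so far. -/
def reduceTokens : List (ℕ × Bool) → List (ℕ × Bool) → List (ℕ × Bool)
  | acc, [] => acc.reverse
  | a :: acc', t :: rest =>
      if a.2 ∧ ¬ t.2 then reduceTokens acc' rest
      else reduceTokens (t :: a :: acc') rest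
  | [], t :: rest => reduceTokens [t] rest

/-- The surviving letters of `{i, i + 1}` in `w` after matched-pair deletion. -/
def survivors (i : ℕ) (w : List ℕ) : List (ℕ × Bool) := reduceTokens [] (tokens i w)

/-- The crystal raising operator `E_i` on words: change the first surviving
(unmatched) letter `i + 1` to `i`; `none` encodes `E_i w = 0`. -/
def crystalE (i : ℕ) (w : List ℕ) : Option (List ℕ) :=
  match (survivors i w).find? (fun t => t.2) with
  | none => none
  | some t => some (w.set t.1 i)

/-! ### Straight-shape tableaux and Schur polynomials -/

/-- Semistandard tableau condition for a filling of the cells of `lam`. -/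
def IsSSYTcells (lam : List ℕ) (T : {u // u ∈ cells lam} → ℕ) : Prop :=
  ∀ u v : {u // u ∈ cells lam},
    (u.1.1 = v.1.1 ∧ u.1.2 ≤ v.1.2 → T u ≤ T v) ∧
    (u.1.2 = v.1.2 ∧ u.1.1 < v.1.1 → T u < T v)

instance (lam : List ℕ) (T : {u // u ∈ cells lam} → ℕ) :
    Decidable (IsSSYTcells lam T) := by unfold IsSSYTcells; infer_instance

/-- The Schur polynomial `s_λ(x_1,…,x_N) = Σ_{T ∈ SSYT(λ), entries ≤ N} x^T`,
with coefficients in a commutative ring `R`. -/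
noncomputable def schurPoly (R : Type) [CommRing R] (lam : List ℕ) (N : ℕ) :
    MvPolynomial (Fin N) R :=
  ∑ T ∈ Finset.univ.filter (fun T : {u // u ∈ cells lam} → Fin N =>
      IsSSYTcells lam (fun u => (T u).val + 1)),
    ∏ u, X (T u)

/-- The decreasing list of parts of `p : Nat.Partition n`. -/
def partnList {n : ℕ} (p : n.Partition) : List ℕ :=
  (Multiset.sort p.parts (· ≤ ·)).reverse



/-! ### Auxiliary material for Statement 12 -/

lemma getD_le_foldr (μ : List ℕ) (i : ℕ) : μ.getD i 0 ≤ μ.foldr max 0 := by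
  induction μ generalizing i with
  | nil => simp
  | cons a t ih =>
    cases i with
    | zero => simpa using le_max_left _ _
    | succ n => exact le_trans (ih n) (le_max_right _ _)

lemma mem_cells {μ : List ℕ} {u : ℕ × ℕ} :
    u ∈ cells μ ↔ 1 ≤ u.1 ∧ u.1 ≤ μ.length ∧ 1 ≤ u.2 ∧ u.2 ≤ μ.getD (u.1 - 1) 0 := by
  simp only [cells, Finset.mem_filter, Finset.mem_product, Finset.mem_Icc]
  constructor
  · rintro ⟨⟨⟨h1, h2⟩, h3, h4⟩, h5⟩
    exact ⟨h1, h2, h3, h5⟩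
  · rintro ⟨h1, h2, h3, h5⟩
    exact ⟨⟨⟨h1, h2⟩, h3, le_trans h5 (getD_le_foldr _ _)⟩, h5⟩

/-- The triple coinversion condition. -/
def Coinv3 (x y z : ℕ) : Prop := if x ≤ z then x ≤ y ∧ y ≤ z else x ≤ y ∨ y ≤ z

lemma head_lemma (R : Multiset ℕ) (hR : R ≠ 0) (z : ℕ) :
    ∃! x, x ∈ R ∧ ∀ y ∈ R.erase x, Coinv3 x y z := by
  have hne : R.toFinset.Nonempty := by
    rcases Multiset.exists_mem_of_ne_zero hR with ⟨a, ha⟩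
    exact ⟨a, Multiset.mem_toFinset.2 ha⟩
  by_cases hS : ∃ r ∈ R, z < r
  · set S := R.toFinset.filter (fun r => z < r) with hSdef
    have hSne : S.Nonempty := by
      rcases hS with ⟨r, hr, hzr⟩
      exact ⟨r, Finset.mem_filter.2 ⟨Multiset.mem_toFinset.2 hr, hzr⟩⟩
    set x₀ := S.min' hSne with hx0
    have hx0S : x₀ ∈ S := S.min'_mem hSne
    have hx0R : x₀ ∈ R := Multiset.mem_toFinset.1 (Finset.mem_filter.1 hx0S).1
    have hzx0 : z < x₀ := (Finset.mem_filter.1 hx0S).2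
    refine ⟨x₀, ⟨hx0R, ?_⟩, ?_⟩
    · intro y hy
      have hyR : y ∈ R := Multiset.mem_of_mem_erase hy
      unfold Coinv3
      rw [if_neg (by omega)]
      by_cases hyz : y ≤ z
      · exact Or.inr hyz
      · left
        exact S.min'_le y (Finset.mem_filter.2 ⟨Multiset.mem_toFinset.2 hyR, by omega⟩)
    · rintro x ⟨hxR, hx⟩
      have hzx : z < x := by
        by_contra hle
        push_neg at hle
        rcases hS with ⟨r, hr, hzr⟩
        have hrx : r ≠ x := by omega
        have := hx r ((Multiset.mem_erase_of_ne hrx).2 hr)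
        unfold Coinv3 at this
        rw [if_pos hle] at this
        omega
      have h1 : x₀ ≤ x := S.min'_le x (Finset.mem_filter.2 ⟨Multiset.mem_toFinset.2 hxR, hzx⟩)
      rcases eq_or_lt_of_le h1 with h | h
      · omega
      · exfalso
        have := hx x₀ ((Multiset.mem_erase_of_ne (by omega)).2 hx0R)
        unfold Coinv3 at this
        rw [if_neg (by omega)] at this
        omega
  · push_neg at hS
    set x₀ := R.toFinset.min' hne with hx0
    have hx0R : x₀ ∈ R := Multiset.mem_toFinset.1 (R.toFinset.min'_mem hne)
    refine ⟨x₀, ⟨hx0R, ?_⟩, ?_⟩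
    · intro y hy
      have hyR : y ∈ R := Multiset.mem_of_mem_erase hy
      unfold Coinv3
      rw [if_pos (hS _ hx0R)]
      exact ⟨R.toFinset.min'_le y (Multiset.mem_toFinset.2 hyR), hS _ hyR⟩
    · rintro x ⟨hxR, hx⟩
      have h1 : x₀ ≤ x := R.toFinset.min'_le x (Multiset.mem_toFinset.2 hxR)
      rcases eq_or_lt_of_le h1 with h | h
      · omega
      · exfalso
        have := hx x₀ ((Multiset.mem_erase_of_ne (by omega)).2 hx0R)
        unfold Coinv3 at this
        rw [if_pos (hS _ hxR)] at this
        omega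

/-- Row lemma: unique arrangement of a multiset over a row. -/
lemma row_lemma (R : Multiset ℕ) (z : ℕ → ℕ) :
    ∃! w : List ℕ, (↑w : Multiset ℕ) = R ∧
      ∀ j k, j < k → k < w.length → Coinv3 (w.getD j 0) (w.getD k 0) (z j) := by
  induction R using Multiset.strongInductionOn generalizing z with
  | ih R IH =>
    rcases eq_or_ne R 0 with rfl | hR
    · refine ⟨[], ⟨rfl, by simp⟩, ?_⟩
      rintro w ⟨hw, -⟩
      simpa using congrArg Multiset.card hw
    · obtain ⟨x, ⟨hxR, hxco⟩, hxuniq⟩ := head_lemma R hR (z 0)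
      obtain ⟨t, ⟨htm, htco⟩, htuniq⟩ :=
        IH (R.erase x) (Multiset.erase_lt.2 hxR) (fun j => z (j + 1))
      refine ⟨x :: t, ⟨?_, ?_⟩, ?_⟩
      · rw [show ((x :: t : List ℕ) : Multiset ℕ) = x ::ₘ ↑t from rfl, htm,
          Multiset.cons_erase hxR]
      · intro j k hjk hk
        cases j with
        | zero =>
          obtain ⟨k', rfl⟩ : ∃ k', k = k' + 1 := ⟨k - 1, by omega⟩
          simp only [List.getD_cons_zero, List.getD_cons_succ]
          apply hxco
          rw [← htm, Multiset.mem_coe]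
          have hk' : k' < t.length := by simpa using hk
          rw [List.getD_eq_getElem t 0 hk']
          exact List.getElem_mem hk'
        | succ j' =>
          obtain ⟨k', rfl⟩ : ∃ k', k = k' + 1 := ⟨k - 1, by omega⟩
          simp only [List.getD_cons_succ]
          exact htco j' k' (by omega) (by simpa using hk)
      · rintro w ⟨hwm, hwco⟩
        cases w with
        | nil =>
          exfalso
          apply hR
          rw [← hwm]; rfl
        | cons a s =>
          have haR : a ∈ R := by
            rw [← hwm]; exact Multiset.mem_coe.2 (List.mem_cons_self (a := a) (l := s))
          have hse : (↑s : Multiset ℕ) = R.erase a := by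
            rw [← hwm, show ((a :: s : List ℕ) : Multiset ℕ) = a ::ₘ ↑s from rfl,
              Multiset.erase_cons_head]
          have hax : a = x := by
            apply hxuniq
            refine ⟨haR, ?_⟩
            intro y hy
            rw [← hse, Multiset.mem_coe] at hy
            obtain ⟨k, hk, rfl⟩ := List.getElem_of_mem hy
            have := hwco 0 (k + 1) (by omega) (by simpa using hk)
            rw [List.getD_cons_zero, List.getD_cons_succ,
              List.getD_eq_getElem s 0 hk] at this
            exact this
          subst hax
          have hst : s = t := by
            apply htuniq
            refine ⟨by rw [hse], ?_⟩
            intro j k hjk hk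
            have := hwco (j + 1) (k + 1) (by omega) (by simpa using hk)
            simpa [List.getD_cons_succ] using this
          rw [hst]

/-- Same-row ordered pairs of cells. -/
def SRP (μ : List ℕ) : Finset ((ℕ × ℕ) × (ℕ × ℕ)) :=
  ((cells μ) ×ˢ (cells μ)).filter fun p => p.1.1 = p.2.1 ∧ p.1.2 < p.2.2

lemma count_inv (μ : List ℕ) (σ : ℕ × ℕ → ℕ) :
    (invPairs μ natInd σ).card =
      ∑ p ∈ SRP μ, ((if σ p.2 < σ p.1 then 1 else 0) +
        (if (p.1.1 - 1, p.1.2) ∈ cells μ ∧ σ (p.1.1 - 1, p.1.2) < σ p.2 then 1 else 0)) := by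
  classical
  have hsplit : invPairs μ natInd σ =
      (((cells μ) ×ˢ (cells μ)).filter fun p =>
        (p.1.1 = p.2.1 ∧ p.1.2 < p.2.2) ∧ σ p.2 < σ p.1) ∪
      (((cells μ) ×ˢ (cells μ)).filter fun p =>
        (p.1.1 = p.2.1 + 1 ∧ p.2.2 < p.1.2) ∧ σ p.2 < σ p.1) := by
    ext p
    rw [invPairs, Finset.mem_union, Finset.mem_filter, Finset.mem_filter, Finset.mem_filter]
    simp only [invPairs, AttackOrd, natInd, Finset.mem_union, Finset.mem_filter]
    tauto
  have hdisj : Disjoint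
      (((cells μ) ×ˢ (cells μ)).filter fun p =>
        (p.1.1 = p.2.1 ∧ p.1.2 < p.2.2) ∧ σ p.2 < σ p.1)
      (((cells μ) ×ˢ (cells μ)).filter fun p =>
        (p.1.1 = p.2.1 + 1 ∧ p.2.2 < p.1.2) ∧ σ p.2 < σ p.1) := by
    rw [Finset.disjoint_left]
    intro p hp hq
    simp only [Finset.mem_filter] at hp hq
    omega
  rw [hsplit, Finset.card_union_of_disjoint hdisj]
  have h1 : (((cells μ) ×ˢ (cells μ)).filter fun p =>
      (p.1.1 = p.2.1 ∧ p.1.2 < p.2.2) ∧ σ p.2 < σ p.1).card =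
      ∑ p ∈ SRP μ, (if σ p.2 < σ p.1 then 1 else 0) := by
    rw [Finset.card_filter]
    rw [SRP, Finset.sum_filter]
    apply Finset.sum_congr rfl
    intro p _
    split_ifs <;> tauto
  have h2 : (((cells μ) ×ˢ (cells μ)).filter fun p =>
      (p.1.1 = p.2.1 + 1 ∧ p.2.2 < p.1.2) ∧ σ p.2 < σ p.1).card =
      ∑ p ∈ SRP μ, (if (p.1.1 - 1, p.1.2) ∈ cells μ ∧ σ (p.1.1 - 1, p.1.2) < σ p.2
        then 1 else 0) := by
    rw [← Finset.card_filter]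
    refine (Finset.card_nbij (i := fun p => (p.2, (p.1.1 - 1, p.1.2))) ?_ ?_ ?_).symm
    · intro p hp
      simp only [SRP, Finset.mem_coe, Finset.mem_filter, Finset.mem_product] at hp
      obtain ⟨⟨⟨hp1, hp2⟩, hrow, hcol⟩, hbelow, hind⟩ := hp
      have h1 : 1 ≤ p.1.1 := (mem_cells.1 hp1).1
      simp only [Finset.mem_coe, Finset.mem_filter, Finset.mem_product]
      exact ⟨⟨hp2, hbelow⟩, ⟨by omega, hcol⟩, hind⟩
    · intro p hp q hq he
      simp only [Finset.coe_filter, Set.mem_setOf_eq, SRP, Finset.mem_filter,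
        Finset.mem_product] at hp hq
      simp only [Prod.mk.injEq, Prod.ext_iff] at he
      obtain ⟨h2, h1, h4⟩ := he
      have hp1 : 1 ≤ p.1.1 := (mem_cells.1 hp.1.1.1).1
      have hq1 : 1 ≤ q.1.1 := (mem_cells.1 hq.1.1.1).1
      have e1 : p.1 = q.1 := Prod.ext (by omega) h4
      exact Prod.ext e1 (Prod.ext h2.1 h2.2)
    · intro q hq
      simp only [Finset.coe_filter, Set.mem_setOf_eq, Finset.mem_filter,
        Finset.mem_product] at hq
      obtain ⟨⟨hq1, hq2⟩, ⟨hrow, hcol⟩, hind⟩ := hq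
      have h1 := mem_cells.1 hq1
      have h2 := mem_cells.1 hq2
      have hrw : ((q.2.1 + 1 - 1, q.2.2) : ℕ × ℕ) = q.2 := by simp
      refine ⟨((q.2.1 + 1, q.2.2), q.1), ?_, ?_⟩
      · simp only [Set.mem_setOf_eq, Finset.coe_filter, SRP, Finset.mem_filter,
          Finset.mem_product]
        refine ⟨⟨⟨mem_cells.2 ⟨by omega, by omega, by omega, ?_⟩, hq1⟩, by omega, by omega⟩,
          ?_, ?_⟩
        · have : q.2.1 + 1 - 1 = q.1.1 - 1 := by omega
          rw [this]; omega
        · rw [hrw]; exact hq2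
        · rw [hrw]; exact hind
      · simp only
        rw [hrw]
  rw [h1, h2, Finset.sum_add_distrib]

lemma count_des (μ : List ℕ) (σ : ℕ × ℕ → ℕ) :
    ∑ u ∈ desCells μ natInd σ, arm μ u =
      ∑ p ∈ SRP μ, (if (p.1.1 - 1, p.1.2) ∈ cells μ ∧ σ (p.1.1 - 1, p.1.2) < σ p.1
        then 1 else 0) := by
  classical
  rw [desCells, Finset.sum_filter, SRP, Finset.sum_filter, Finset.sum_product]
  apply Finset.sum_congr rfl
  intro u hu
  rw [arm, Finset.card_filter]
  by_cases hD : (u.1 - 1, u.2) ∈ cells μ ∧ natInd (σ u) (σ (u.1 - 1, u.2))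
  · rw [if_pos hD]
    apply Finset.sum_congr rfl
    intro v hv
    by_cases h : v.1 = u.1 ∧ u.2 < v.2
    · rw [if_pos h, if_pos ⟨h.1.symm, h.2⟩, if_pos]
      exact ⟨hD.1, hD.2⟩
    · rw [if_neg h, if_neg]
      intro hc
      exact h ⟨hc.1.symm, hc.2⟩
  · rw [if_neg hD]
    symm
    apply Finset.sum_eq_zero
    intro v hv
    by_cases h : u.1 = v.1 ∧ u.2 < v.2
    · rw [if_pos h, if_neg]
      intro hc
      exact hD ⟨hc.1, hc.2⟩
    · rw [if_neg h]

lemma key_equiv (μ : List ℕ) (σ : ℕ × ℕ → ℕ) (hpos : ∀ u ∈ cells μ, 1 ≤ σ u)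
    (h0 : ∀ u, u ∉ cells μ → σ u = 0) :
    ((invPairs μ natInd σ).card = ∑ u ∈ desCells μ natInd σ, arm μ u) ↔
      ∀ p ∈ SRP μ, Coinv3 (σ p.1) (σ p.2) (σ (p.1.1 - 1, p.1.2)) := by
  classical
  rw [count_inv μ σ, count_des μ σ, eq_comm]
  have hle : ∀ p ∈ SRP μ,
      (if (p.1.1 - 1, p.1.2) ∈ cells μ ∧ σ (p.1.1 - 1, p.1.2) < σ p.1 then 1 else 0) ≤
      ((if σ p.2 < σ p.1 then 1 else 0) +
        (if (p.1.1 - 1, p.1.2) ∈ cells μ ∧ σ (p.1.1 - 1, p.1.2) < σ p.2 then 1 else 0)) := by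
    intro p hp
    by_cases hb : (p.1.1 - 1, p.1.2) ∈ cells μ
    · simp only [hb, true_and]
      split_ifs <;> omega
    · simp only [hb, false_and, if_false]
      omega
  rw [Finset.sum_eq_sum_iff_of_le hle]
  apply forall_congr'
  intro p
  apply imp_congr_right
  intro hp
  simp only [SRP, Finset.mem_filter, Finset.mem_product] at hp
  have hx : 1 ≤ σ p.1 := hpos _ hp.1.1
  have hy : 1 ≤ σ p.2 := hpos _ hp.1.2
  by_cases hb : (p.1.1 - 1, p.1.2) ∈ cells μ
  · simp only [hb, true_and]
    unfold Coinv3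
    split_ifs <;> (constructor <;> intro h <;> first | omega | exact h.elim)
  · rw [h0 _ hb]
    simp only [hb, false_and, if_false]
    unfold Coinv3
    split_ifs <;> (constructor <;> intro h <;> first | omega | exact h.elim)

lemma extendF_apply {μ : List ℕ} (f : {u // u ∈ cells μ} → ℕ) {u : ℕ × ℕ}
    (h : u ∈ cells μ) : extendF μ 0 f u = f ⟨u, h⟩ := dif_pos h

lemma extendF_not_mem {μ : List ℕ} (f : {u // u ∈ cells μ} → ℕ) {u : ℕ × ℕ}
    (h : u ∉ cells μ) : extendF μ 0 f u = 0 := dif_neg h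

/-- The list of entries of a filling along row `i + 1`. -/
def wrow (μ : List ℕ) (f : {u // u ∈ cells μ} → ℕ) (i : ℕ) : List ℕ :=
  (List.range (μ.getD i 0)).map fun j => extendF μ 0 f (i + 1, j + 1)

/-- The row below row `i + 1`. -/
def prevW (μ : List ℕ) (f : {u // u ∈ cells μ} → ℕ) : ℕ → List ℕ
  | 0 => []
  | n + 1 => wrow μ f n

lemma wrow_length (μ : List ℕ) (f : {u // u ∈ cells μ} → ℕ) (i : ℕ) :
    (wrow μ f i).length = μ.getD i 0 := by simp [wrow]

lemma wrow_getD (μ : List ℕ) (f : {u // u ∈ cells μ} → ℕ) (i j : ℕ) :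
    (wrow μ f i).getD j 0 = extendF μ 0 f (i + 1, j + 1) := by
  by_cases hj : j < μ.getD i 0
  · rw [List.getD_eq_getElem _ _ (by simpa [wrow_length] using hj)]
    simp [wrow]
  · rw [List.getD_eq_default _ _ (by rw [wrow_length]; omega)]
    rw [extendF_not_mem]
    intro hmem
    have := mem_cells.1 hmem
    simp only [Nat.add_sub_cancel] at this
    omega

lemma prevW_getD (μ : List ℕ) (f : {u // u ∈ cells μ} → ℕ) (i j : ℕ) :
    (prevW μ f i).getD j 0 = extendF μ 0 f (i, j + 1) := by
  cases i with
  | zero =>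
    rw [show prevW μ f 0 = [] from rfl]
    rw [extendF_not_mem]
    · rfl
    · intro hmem
      have := mem_cells.1 hmem
      omega
  | succ n => exact wrow_getD μ f n j

lemma map_row_eq (μ : List ℕ) (f : {u // u ∈ cells μ} → ℕ) (i : ℕ) (hi : i < μ.length) :
    Multiset.map f ((cells μ).attach.filter fun u => u.1.1 = i + 1).val =
      (↑(wrow μ f i) : Multiset ℕ) := by
  classical
  have hrow : (cells μ).filter (fun u => u.1 = i + 1) =
      (Finset.range (μ.getD i 0)).map
        ⟨fun j => (i + 1, j + 1), by intro a b h; simpa [Prod.ext_iff] using h⟩ := by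
    ext u
    simp only [Finset.mem_filter, Finset.mem_map, Finset.mem_range,
      Function.Embedding.coeFn_mk]
    constructor
    · rintro ⟨hu, hr⟩
      have h := mem_cells.1 hu
      rw [hr] at h
      simp only [Nat.add_sub_cancel] at h
      exact ⟨u.2 - 1, by omega, Prod.ext (by exact hr.symm) (by show u.2 - 1 + 1 = u.2; omega)⟩
    · rintro ⟨j, hj, rfl⟩
      show ((i + 1 : ℕ), (j + 1 : ℕ)) ∈ cells μ ∧ ((i + 1 : ℕ), (j + 1 : ℕ)).1 = i + 1
      refine ⟨mem_cells.2 ⟨by omega, by omega, by omega, ?_⟩, rfl⟩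
      simp only [Nat.add_sub_cancel]
      omega
  rw [Finset.filter_attach (fun u : ℕ × ℕ => u.1 = i + 1) (cells μ), Finset.map_val,
    Multiset.map_map]
  have e2 : Multiset.map (f ∘ ⇑((Function.Embedding.refl (ℕ × ℕ)).subtypeMap
        (fun _ => Finset.mem_of_mem_filter _)))
        ((cells μ).filter (fun u => u.1 = i + 1)).attach.val =
      Multiset.map (fun a => extendF μ 0 f a.1)
        ((cells μ).filter (fun u => u.1 = i + 1)).attach.val := by
    apply Multiset.map_congr rfl
    intro a _
    exact (extendF_apply f (Finset.mem_of_mem_filter _ a.2)).symm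
  rw [e2]
  have e3 : Multiset.map (fun a : {x // x ∈ (cells μ).filter (fun u => u.1 = i + 1)} =>
        extendF μ 0 f a.1) ((cells μ).filter (fun u => u.1 = i + 1)).attach.val =
      Multiset.map (extendF μ 0 f) ((cells μ).filter (fun u => u.1 = i + 1)).val := by
    have := Multiset.attach_map_val ((cells μ).filter (fun u => u.1 = i + 1)).val
    conv_rhs => rw [← this]
    rw [Multiset.map_map]
    rfl
  rw [e3, hrow]
  rw [show ((Finset.range (μ.getD i 0)).map
      ⟨fun j => ((i + 1 : ℕ), (j + 1 : ℕ)), by intro a b h; simpa [Prod.ext_iff] using h⟩).val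
      = Multiset.map (fun j => ((i + 1 : ℕ), (j + 1 : ℕ)))
          (Multiset.range (μ.getD i 0)) from rfl]
  rw [Multiset.map_map]
  show Multiset.map _ (↑(List.range (μ.getD i 0)) : Multiset ℕ) = _
  rw [Multiset.map_coe]
  rfl

lemma SRP_equiv (μ : List ℕ) (f : {u // u ∈ cells μ} → ℕ) :
    (∀ p ∈ SRP μ, Coinv3 (extendF μ 0 f p.1) (extendF μ 0 f p.2)
        (extendF μ 0 f (p.1.1 - 1, p.1.2))) ↔
      ∀ i, i < μ.length → ∀ j k, j < k → k < μ.getD i 0 →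
        Coinv3 ((wrow μ f i).getD j 0) ((wrow μ f i).getD k 0)
          ((prevW μ f i).getD j 0) := by
  constructor
  · intro h i hi j k hjk hk
    have hcell2 : ((i + 1 : ℕ), (k + 1 : ℕ)) ∈ cells μ := by
      rw [mem_cells]
      refine ⟨by omega, by omega, by omega, ?_⟩
      simp only [Nat.add_sub_cancel]
      omega
    have hcell1 : ((i + 1 : ℕ), (j + 1 : ℕ)) ∈ cells μ := by
      rw [mem_cells]
      refine ⟨by omega, by omega, by omega, ?_⟩
      simp only [Nat.add_sub_cancel]
      omega
    have hp : (((i + 1, j + 1), (i + 1, k + 1)) : (ℕ × ℕ) × (ℕ × ℕ)) ∈ SRP μ := by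
      simp only [SRP]
      exact Finset.mem_filter.2 ⟨Finset.mem_product.2 ⟨hcell1, hcell2⟩, rfl,
        Nat.add_lt_add_right hjk 1⟩
    have hC := h _ hp
    rw [wrow_getD, wrow_getD, prevW_getD]
    simp only [Nat.add_sub_cancel] at hC
    exact hC
  · intro h p hp
    have hp' := hp
    simp only [SRP, Finset.mem_filter, Finset.mem_product] at hp'
    obtain ⟨⟨hm1, hm2⟩, hrow, hcol⟩ := hp'
    have h1 := mem_cells.1 hm1
    have h2 := mem_cells.1 hm2
    have hklt : p.2.2 - 1 < μ.getD (p.1.1 - 1) 0 := by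
      have hb : p.2.2 ≤ μ.getD (p.1.1 - 1) 0 := by
        rw [hrow]; exact h2.2.2.2
      omega
    have hC := h (p.1.1 - 1) (by omega) (p.1.2 - 1) (p.2.2 - 1) (by omega) hklt
    rw [wrow_getD, wrow_getD, prevW_getD] at hC
    have e1 : ((p.1.1 - 1 + 1, p.1.2 - 1 + 1) : ℕ × ℕ) = p.1 :=
      Prod.ext (by omega) (by omega)
    have e2 : ((p.1.1 - 1 + 1, p.2.2 - 1 + 1) : ℕ × ℕ) = p.2 :=
      Prod.ext (by omega) (by omega)
    have e3 : ((p.1.1 - 1, p.1.2 - 1 + 1) : ℕ × ℕ) = (p.1.1 - 1, p.1.2) :=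
      Prod.ext rfl (by omega)
    rw [e1, e2, e3] at hC
    exact hC

lemma extendF_pos (μ : List ℕ) (M : Fin μ.length → Multiset ℕ)
    (hpos : ∀ i, ∀ x ∈ M i, 0 < x) (f : {u // u ∈ cells μ} → ℕ)
    (h1 : ∀ i : Fin μ.length,
      Multiset.map f ((cells μ).attach.filter fun u => u.1.1 = i.val + 1).val = M i) :
    ∀ u ∈ cells μ, 1 ≤ extendF μ 0 f u := by
  intro u hu
  have hc := mem_cells.1 hu
  have hi : u.1 - 1 < μ.length := by omega
  have hmem : (⟨u, hu⟩ : {x // x ∈ cells μ}) ∈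
      (cells μ).attach.filter fun a => a.1.1 = (⟨u.1 - 1, hi⟩ : Fin μ.length).val + 1 :=
    Finset.mem_filter.2 ⟨Finset.mem_attach _ _, by simp; omega⟩
  have hf : f ⟨u, hu⟩ ∈ M ⟨u.1 - 1, hi⟩ := by
    rw [← h1 ⟨u.1 - 1, hi⟩]
    exact Multiset.mem_map_of_mem f hmem
  have := hpos _ _ hf
  rw [extendF_apply f hu]
  omega

/-- The canonical rows, built from the bottom up. -/
noncomputable def rowsL (M' : ℕ → Multiset ℕ) : ℕ → List ℕ
  | 0 => (row_lemma (M' 0) (fun j => ([] : List ℕ).getD j 0)).choose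
  | n + 1 => (row_lemma (M' (n + 1)) (fun j => (rowsL M' n).getD j 0)).choose

noncomputable def prevL (M' : ℕ → Multiset ℕ) : ℕ → List ℕ
  | 0 => []
  | n + 1 => rowsL M' n

lemma rowsL_spec (M' : ℕ → Multiset ℕ) (i : ℕ) :
    (↑(rowsL M' i) : Multiset ℕ) = M' i ∧
      ∀ j k, j < k → k < (rowsL M' i).length →
        Coinv3 ((rowsL M' i).getD j 0) ((rowsL M' i).getD k 0)
          ((prevL M' i).getD j 0) := by
  cases i with
  | zero => exact (row_lemma (M' 0) (fun j => ([] : List ℕ).getD j 0)).choose_spec.1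
  | succ n =>
    exact (row_lemma (M' (n + 1)) (fun j => (rowsL M' n).getD j 0)).choose_spec.1

lemma rowsL_unique (M' : ℕ → Multiset ℕ) (i : ℕ) (w : List ℕ)
    (hw : (↑w : Multiset ℕ) = M' i ∧ ∀ j k, j < k → k < w.length →
      Coinv3 (w.getD j 0) (w.getD k 0) ((prevL M' i).getD j 0)) :
    w = rowsL M' i := by
  cases i with
  | zero => exact (row_lemma (M' 0) (fun j => ([] : List ℕ).getD j 0)).choose_spec.2 w hw
  | succ n =>
    exact (row_lemma (M' (n + 1)) (fun j => (rowsL M' n).getD j 0)).choose_spec.2 w hw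

/-- Let `μ` be a partition of length `l` and, for each
`i = 1,…,l`, let `M_i` be a multiset of `μ_i` positive integers.  Then there is
a unique filling `σ : dg(μ) → ℤ₊` whose multiset of entries in row `i` is `M_i`
for each `i` and which satisfies `inv(σ) = 0` (i.e. `|Inv(σ)| = Σ_{u ∈ Des(σ)} arm(u)`). -/
theorem existsUnique_noninverted_filling (μ : List ℕ) (hμ : IsPartitionList μ)
    (M : Fin μ.length → Multiset ℕ)
    (hcard : ∀ i, (M i).card = μ.getD i.val 0)
    (hpos : ∀ i, ∀ x ∈ M i, 0 < x) :
    ∃! f : {u // u ∈ cells μ} → ℕ,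
      (∀ i : Fin μ.length,
        Multiset.map f ((cells μ).attach.filter fun u => u.1.1 = i.val + 1).val = M i) ∧
      (invPairs μ natInd (extendF μ 0 f)).card
        = ∑ u ∈ desCells μ natInd (extendF μ 0 f), arm μ u := by
  classical
  set M' : ℕ → Multiset ℕ := fun i => if h : i < μ.length then M ⟨i, h⟩ else 0 with hM'
  have hM'eq : ∀ (i : ℕ) (hi : i < μ.length), M' i = M ⟨i, hi⟩ := fun i hi => dif_pos hi
  have h0' : ∀ (f : {u // u ∈ cells μ} → ℕ) u, u ∉ cells μ → extendF μ 0 f u = 0 :=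
    fun f u hu => dif_neg hu
  have key : ∀ f : {u // u ∈ cells μ} → ℕ,
      ((∀ i : Fin μ.length,
        Multiset.map f ((cells μ).attach.filter fun u => u.1.1 = i.val + 1).val = M i) ∧
      (invPairs μ natInd (extendF μ 0 f)).card
        = ∑ u ∈ desCells μ natInd (extendF μ 0 f), arm μ u) ↔
      (∀ i, i < μ.length → ((↑(wrow μ f i) : Multiset ℕ) = M' i ∧
        ∀ j k, j < k → k < (wrow μ f i).length →
          Coinv3 ((wrow μ f i).getD j 0) ((wrow μ f i).getD k 0)
            ((prevW μ f i).getD j 0))) := by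
    intro f
    constructor
    · rintro ⟨h1, h2⟩
      have hposσ : ∀ u ∈ cells μ, 1 ≤ extendF μ 0 f u := extendF_pos μ M hpos f h1
      have hco := (key_equiv μ _ hposσ (h0' f)).1 h2
      have hrows := (SRP_equiv μ f).1 hco
      intro i hi
      refine ⟨?_, ?_⟩
      · rw [← map_row_eq μ f i hi, h1 ⟨i, hi⟩, hM'eq i hi]
      · intro j k hjk hk
        exact hrows i hi j k hjk (by rwa [wrow_length] at hk)
    · intro hR
      have h1 : ∀ i : Fin μ.length,
          Multiset.map f ((cells μ).attach.filter fun u => u.1.1 = i.val + 1).val = M i := by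
        intro i
        rw [map_row_eq μ f i.val i.isLt, (hR i.val i.isLt).1, hM'eq i.val i.isLt]
      refine ⟨h1, ?_⟩
      have hposσ : ∀ u ∈ cells μ, 1 ≤ extendF μ 0 f u := extendF_pos μ M hpos f h1
      apply (key_equiv μ _ hposσ (h0' f)).2
      apply (SRP_equiv μ f).2
      intro i hi j k hjk hk
      exact (hR i hi).2 j k hjk (by rwa [wrow_length])
  apply (existsUnique_congr key).mpr
  have main : ∀ (f : {u // u ∈ cells μ} → ℕ),
      (∀ i, i < μ.length → ((↑(wrow μ f i) : Multiset ℕ) = M' i ∧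
        ∀ j k, j < k → k < (wrow μ f i).length →
          Coinv3 ((wrow μ f i).getD j 0) ((wrow μ f i).getD k 0)
            ((prevW μ f i).getD j 0))) →
      ∀ i, i < μ.length → wrow μ f i = rowsL M' i := by
    intro f hf i
    induction i with
    | zero =>
      intro hi
      exact rowsL_unique M' 0 _ ⟨(hf 0 hi).1, (hf 0 hi).2⟩
    | succ n ih =>
      intro hn
      have hprev : wrow μ f n = rowsL M' n := ih (by omega)
      apply rowsL_unique
      refine ⟨(hf (n + 1) hn).1, ?_⟩
      intro j k hjk hk
      have hc := (hf (n + 1) hn).2 j k hjk hk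
      rwa [show prevW μ f (n + 1) = wrow μ f n from rfl, hprev] at hc
  set f0 : {u // u ∈ cells μ} → ℕ :=
    fun u => (rowsL M' (u.1.1 - 1)).getD (u.1.2 - 1) 0 with hf0def
  have hlen : ∀ i, i < μ.length → (rowsL M' i).length = μ.getD i 0 := by
    intro i hi
    have hs := (rowsL_spec M' i).1
    have hc := congrArg Multiset.card hs
    rw [Multiset.coe_card] at hc
    rw [hc, hM'eq i hi, hcard ⟨i, hi⟩]
  have hw0 : ∀ i, i < μ.length → wrow μ f0 i = rowsL M' i := by
    intro i hi
    apply List.ext_getElem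
    · rw [wrow_length, hlen i hi]
    · intro j hj1 hj2
      rw [← List.getD_eq_getElem _ 0 hj1, ← List.getD_eq_getElem _ 0 hj2, wrow_getD]
      have hj : j < μ.getD i 0 := by rwa [wrow_length] at hj1
      have hcell : ((i + 1 : ℕ), (j + 1 : ℕ)) ∈ cells μ := by
        rw [mem_cells]
        refine ⟨by omega, by omega, by omega, ?_⟩
        simp only [Nat.add_sub_cancel]
        omega
      rw [extendF_apply f0 hcell]
      simp [hf0def]
  refine ⟨f0, ?_, ?_⟩
  · intro i hi
    constructor
    · rw [hw0 i hi]
      exact (rowsL_spec M' i).1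
    · intro j k hjk hk
      rw [hw0 i hi] at hk ⊢
      have hp : prevW μ f0 i = prevL M' i := by
        cases i with
        | zero => rfl
        | succ n =>
          show wrow μ f0 n = rowsL M' n
          exact hw0 n (by omega)
      rw [hp]
      exact (rowsL_spec M' i).2 j k hjk hk
  · intro f hf
    have hfr := main f hf
    funext u
    have hc := mem_cells.1 u.2
    have hi : u.1.1 - 1 < μ.length := by omega
    have e1 : f u = (wrow μ f (u.1.1 - 1)).getD (u.1.2 - 1) 0 := by
      rw [wrow_getD]
      have e : ((u.1.1 - 1 + 1, u.1.2 - 1 + 1) : ℕ × ℕ) = u.1 :=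
        Prod.ext (by omega) (by omega)
      rw [e, extendF_apply f u.2]
    rw [e1, hfr (u.1.1 - 1) hi]


end HHL
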